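/- Let A, B ∈ ℝ^{d×d} be symmetric matrices with A ⪰ B ≻ 0 (i.e. B is positive definite and A − B is positive semidefinite). Then tr(A^{-1}(A − B)) ≤ Σ_{i=1}^d log( λ_i(A) / λ_i(B) ), where λ_i(M) denotes the i-th largest eigenvalue of the symmetric matrix M. -/

import Mathlib

open Matrix Finset

noncomputable section

lemma aux_trace_eq {d : ℕ} {A : Matrix (Fin d) (Fin d) ℝ} (hA : A.IsHermitian) :
    A.trace = ∑ i, hA.eigenvalues i := by
  conv_lhs => rw [hA.spectral_theorem, Unitary.conjStarAlgAut_apply]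
  rw [Matrix.trace_mul_cycle]
  simp [Matrix.mul_assoc, Unitary.star_mul_self_of_mem hA.eigenvectorUnitary.2,
    Matrix.trace_diagonal]

lemma aux_posDef_conj {d : ℕ} {A S : Matrix (Fin d) (Fin d) ℝ} (hA : A.PosDef)
    (hS : IsUnit S) : (Sᴴ * A * S).PosDef := by
  refine Matrix.PosDef.of_dotProduct_mulVec_pos (Matrix.isHermitian_conjTranspose_mul_mul S hA.1) fun x hx => ?_
  have hSx : S *ᵥ x ≠ 0 := fun h => hx <| (Matrix.mulVec_injective_iff_isUnit.mpr hS)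
    (h.trans (Matrix.mulVec_zero S).symm)
  simpa only [star_mulVec, dotProduct_mulVec, vecMul_vecMul] using hA.dotProduct_mulVec_pos hSx

lemma aux_sum_log_eig {d : ℕ} {M : Matrix (Fin d) (Fin d) ℝ} (hM : M.PosDef) :
    ∑ i, Real.log (hM.1.eigenvalues i) = Real.log M.det := by
  have hdet : M.det = ∏ i, hM.1.eigenvalues i := by simpa using hM.1.det_eq_prod_eigenvalues
  rw [hdet, Real.log_prod]
  exact fun i _ => (hM.eigenvalues_pos i).ne'

/-- `μ` lists the eigenvalues of the Hermitian matrix `A` in decreasing order: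
`μ i` is the `i`-th largest eigenvalue of `A`. -/
def IsDecrEigSeq {d : ℕ} {A : Matrix (Fin d) (Fin d) ℝ} (hA : A.IsHermitian)
    (μ : Fin d → ℝ) : Prop :=
  Antitone μ ∧ ∃ σ : Equiv.Perm (Fin d), μ = hA.eigenvalues ∘ σ

/-- **Lemma 12 of Hazan et al.**: for symmetric matrices `A ⪰ B ≻ 0`,
`tr(A⁻¹ (A − B)) ≤ ∑_i log (λ_i(A) / λ_i(B))`, with eigenvalues in
decreasing order. -/
theorem trace_inv_mul_sub_le_sum_log_eig_ratio
    (d : ℕ) (A B : Matrix (Fin d) (Fin d) ℝ)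
    (hA : A.IsHermitian) (hB : B.PosDef) (hAB : (A - B).PosSemidef)
    (μA μB : Fin d → ℝ)
    (hμA : IsDecrEigSeq hA μA)
    (hμB : IsDecrEigSeq hB.isHermitian μB) :
    (A⁻¹ * (A - B)).trace ≤ ∑ i, Real.log (μA i / μB i) := by
  have hApd : A.PosDef := by
    have h := Matrix.PosDef.posSemidef_add hAB hB
    rwa [sub_add_cancel] at h
  have hAinv : A⁻¹.PosDef := hApd.inv
  open scoped MatrixOrder in set S := CFC.sqrt A⁻¹ with hSdef
  have hSS : S * S = A⁻¹ := by
    open scoped MatrixOrder in exact CFC.sqrt_mul_sqrt_self _ hAinv.posSemidef.nonneg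
  have hSH : S.IsHermitian := by
    open scoped MatrixOrder in exact (CFC.sqrt_nonneg A⁻¹).posSemidef.1
  have hSdet : S.det ≠ 0 := by
    have : S.det * S.det ≠ 0 := by rw [← Matrix.det_mul, hSS]; exact hAinv.det_pos.ne'
    exact mul_self_ne_zero.mp this
  have hSunit : IsUnit S := (Matrix.isUnit_iff_isUnit_det S).2 hSdet.isUnit
  have hC : (S * B * S).PosDef := by
    have h := aux_posDef_conj hB hSunit
    rwa [hSH.eq] at h
  set lam := hC.1.eigenvalues with hlamdef
  have hlam_pos : ∀ i, 0 < lam i := hC.eigenvalues_pos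
  have hdetC : (S * B * S).det = A.det⁻¹ * B.det := by
    have hs2 : S.det * S.det = A.det⁻¹ := by
      rw [← Matrix.det_mul, hSS, Matrix.det_nonsing_inv, Ring.inverse_eq_inv]
    rw [Matrix.det_mul, Matrix.det_mul, ← hs2]
    ring
  obtain ⟨-, σA, hσA⟩ := hμA
  obtain ⟨-, σB, hσB⟩ := hμB
  calc (A⁻¹ * (A - B)).trace = ∑ i, (1 - lam i) := by
        rw [Matrix.mul_sub, Matrix.nonsing_inv_mul A hApd.det_pos.ne'.isUnit,
          Matrix.trace_sub, Matrix.trace_one]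
        have h1 : (A⁻¹ * B).trace = ∑ i, lam i := by
          rw [← hSS, Matrix.mul_assoc, Matrix.trace_mul_comm]; exact aux_trace_eq hC.1
        rw [h1, Finset.sum_sub_distrib]
        simp
    _ ≤ ∑ i, (- Real.log (lam i)) := by
        refine Finset.sum_le_sum fun i _ => ?_
        have := Real.log_le_sub_one_of_pos (hlam_pos i)
        linarith
    _ = Real.log A.det - Real.log B.det := by
        rw [Finset.sum_neg_distrib, aux_sum_log_eig hC, hdetC,
          Real.log_mul (inv_ne_zero hApd.det_pos.ne') hB.det_pos.ne', Real.log_inv]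
        ring
    _ = ∑ i, Real.log (μA i / μB i) := by
        have hA' : ∑ i, Real.log (μA i) = Real.log A.det := by
          rw [hσA, ← aux_sum_log_eig hApd]
          exact Equiv.sum_comp σA (fun i => Real.log (hApd.1.eigenvalues i))
        have hB' : ∑ i, Real.log (μB i) = Real.log B.det := by
          rw [hσB, ← aux_sum_log_eig hB]
          exact Equiv.sum_comp σB (fun i => Real.log (hB.1.eigenvalues i))
        have : ∑ i, Real.log (μA i / μB i) = ∑ i, (Real.log (μA i) - Real.log (μB i)) := by
          refine Finset.sum_congr rfl fun i _ => ?_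
          have hμBpos : μB i ≠ 0 := by
            rw [hσB]; exact (hB.eigenvalues_pos (σB i)).ne'
          have hμApos : μA i ≠ 0 := by
            rw [hσA]; exact (hApd.eigenvalues_pos (σA i)).ne'
          exact Real.log_div hμApos hμBpos
        rw [this, Finset.sum_sub_distrib, hA', hB']
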